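/- If the matrix C has at least one nonzero entry (i.e. the directed graph G has at least one edge), then there exists a point x_* ∈ X with f(x_*) = 0, ∑_{j=1}^d (x_*)_j = 1, x_* ≥ 0 componentwise, and x_* not identically zero; that is, the system admits an equilibrium point in X. -/
import Mathlib


open Matrix Finset


section JK
variable {d : ℕ} (C : Matrix (Fin d) (Fin d) ℝ)

/-- entries of 1 + C are nonneg -/
lemma jk_entry_nonneg (hC01 : ∀ i j, C i j = 0 ∨ C i j = 1) (i j : Fin d) :
    0 ≤ ((1 : Matrix (Fin d) (Fin d) ℝ) + C) i j := by
  have := hC01 i j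
  simp only [Matrix.add_apply, Matrix.one_apply]
  rcases this with h | h <;> rw [h] <;> split <;> norm_num

lemma jk_mulVec_nonneg (hC01 : ∀ i j, C i j = 0 ∨ C i j = 1)
    {z : Fin d → ℝ} (hz : ∀ j, 0 ≤ z j) (i : Fin d) :
    0 ≤ ((1 : Matrix (Fin d) (Fin d) ℝ) + C).mulVec z i := by
  simp only [Matrix.mulVec, dotProduct]
  exact Finset.sum_nonneg fun j _ => mul_nonneg (jk_entry_nonneg C hC01 i j) (hz j)

lemma jk_le_mulVec (hC01 : ∀ i j, C i j = 0 ∨ C i j = 1) (hCdiag : ∀ j, C j j = 0)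
    {z : Fin d → ℝ} (hz : ∀ j, 0 ≤ z j) (i : Fin d) :
    z i ≤ ((1 : Matrix (Fin d) (Fin d) ℝ) + C).mulVec z i := by
  have h1 : ((1 : Matrix (Fin d) (Fin d) ℝ) + C) i i * z i = z i := by
    simp [Matrix.add_apply, Matrix.one_apply, hCdiag i]
  calc z i = ((1 : Matrix (Fin d) (Fin d) ℝ) + C) i i * z i := h1.symm
    _ ≤ ∑ j, ((1 : Matrix (Fin d) (Fin d) ℝ) + C) i j * z j :=
        Finset.single_le_sum (fun j _ => mul_nonneg (jk_entry_nonneg C hC01 i j) (hz j))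
          (Finset.mem_univ i)
    _ = _ := by simp [Matrix.mulVec, dotProduct]

/-- iterates stay nonneg -/
lemma jk_pow_nonneg (hC01 : ∀ i j, C i j = 0 ∨ C i j = 1)
    {z : Fin d → ℝ} (hz : ∀ j, 0 ≤ z j) (n : ℕ) (i : Fin d) :
    0 ≤ (((1 : Matrix (Fin d) (Fin d) ℝ) + C) ^ n).mulVec z i := by
  induction n generalizing i with
  | zero => simpa using hz i
  | succ n ih =>
      rw [pow_succ', ← Matrix.mulVec_mulVec]
      exact jk_mulVec_nonneg C hC01 (fun j => ih j) i

/-- iterates are monotone -/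
lemma jk_pow_mono (hC01 : ∀ i j, C i j = 0 ∨ C i j = 1) (hCdiag : ∀ j, C j j = 0)
    {z : Fin d → ℝ} (hz : ∀ j, 0 ≤ z j) {n m : ℕ} (hnm : n ≤ m) (i : Fin d) :
    (((1 : Matrix (Fin d) (Fin d) ℝ) + C) ^ n).mulVec z i
      ≤ (((1 : Matrix (Fin d) (Fin d) ℝ) + C) ^ m).mulVec z i := by
  induction m with
  | zero => simp_all
  | succ m ih =>
      rcases Nat.lt_or_ge n (m+1) with h | h
      · have := ih (Nat.lt_succ_iff.mp h)
        refine this.trans ?_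
        rw [pow_succ', ← Matrix.mulVec_mulVec]
        exact jk_le_mulVec C hC01 hCdiag (fun j => jk_pow_nonneg C hC01 hz m j) i
      · have : n = m + 1 := le_antisymm hnm h
        simp [this]

/-- reachability propagates positivity -/
lemma jk_reach_pos (hC01 : ∀ i j, C i j = 0 ∨ C i j = 1) (hCdiag : ∀ j, C j j = 0)
    {z : Fin d → ℝ} (hz : ∀ j, 0 ≤ z j) {i0 j : Fin d} (hpos : 0 < z i0)
    (h : Relation.ReflTransGen (fun a b => C b a ≠ 0) i0 j) :
    ∃ n, 0 < (((1 : Matrix (Fin d) (Fin d) ℝ) + C) ^ n).mulVec z j := by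
  induction h with
  | refl => exact ⟨0, by simpa using hpos⟩
  | tail hab hbc ih =>
      rename_i b c
      obtain ⟨n, hn⟩ := ih
      refine ⟨n + 1, ?_⟩
      rw [pow_succ', ← Matrix.mulVec_mulVec]
      set w := (((1 : Matrix (Fin d) (Fin d) ℝ) + C) ^ n).mulVec z with hw
      have hwn : ∀ j, 0 ≤ w j := fun j => jk_pow_nonneg C hC01 hz n j
      have hMcb : 0 < ((1 : Matrix (Fin d) (Fin d) ℝ) + C) c b := by
        rcases hC01 c b with h0 | h1
        · exact absurd h0 hbc
        · simp only [Matrix.add_apply, Matrix.one_apply, h1]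
          split <;> norm_num
      have : ((1 : Matrix (Fin d) (Fin d) ℝ) + C) c b * w b
          ≤ ((1 : Matrix (Fin d) (Fin d) ℝ) + C).mulVec w c := by
        rw [show ((1 : Matrix (Fin d) (Fin d) ℝ) + C).mulVec w c
            = ∑ j, ((1 : Matrix (Fin d) (Fin d) ℝ) + C) c j * w j by
          simp [Matrix.mulVec, dotProduct]]
        exact Finset.single_le_sum
          (fun j _ => mul_nonneg (jk_entry_nonneg C hC01 c j) (hwn j)) (Finset.mem_univ b)
      exact lt_of_lt_of_le (mul_pos hMcb hn) this

/-- support stays in a closed set -/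
lemma jk_support_closed (S : Finset (Fin d))
    (hclosed : ∀ j ∈ S, ∀ i, C i j ≠ 0 → i ∈ S)
    {x : Fin d → ℝ} (hx : ∀ j ∉ S, x j = 0) :
    ∀ j ∉ S, ((1 : Matrix (Fin d) (Fin d) ℝ) + C).mulVec x j = 0 := by
  intro j hj
  rw [show ((1 : Matrix (Fin d) (Fin d) ℝ) + C).mulVec x j
      = ∑ k, ((1 : Matrix (Fin d) (Fin d) ℝ) + C) j k * x k by
    simp [Matrix.mulVec, dotProduct]]
  refine Finset.sum_eq_zero fun k _ => ?_
  by_cases hk : k ∈ S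
  · have hCjk : C j k = 0 := by
      by_contra h
      exact hj (hclosed k hk j h)
    have hjk : j ≠ k := fun h => hj (h ▸ hk)
    simp [Matrix.add_apply, Matrix.one_apply, hjk, hCjk]
  · simp [hx k hk]

lemma jk_pow_support_closed (S : Finset (Fin d))
    (hclosed : ∀ j ∈ S, ∀ i, C i j ≠ 0 → i ∈ S)
    {x : Fin d → ℝ} (hx : ∀ j ∉ S, x j = 0) (n : ℕ) :
    ∀ j ∉ S, (((1 : Matrix (Fin d) (Fin d) ℝ) + C) ^ n).mulVec x j = 0 := by
  induction n with
  | zero => simpa using hx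
  | succ n ih =>
      intro j hj
      rw [pow_succ', ← Matrix.mulVec_mulVec]
      exact jk_support_closed C S hclosed ih j hj

end JK



/-- If the graph has at least one edge (some entry of `C` is nonzero),
then there exists an equilibrium point `x_*` in `X`, i.e. `f(x_*) = 0`, components
summing to 1, componentwise non-negative and not identically zero. -/
theorem jain_krishna_equilibrium_exists
    (d : ℕ) (hd : 2 ≤ d)
    (C : Matrix (Fin d) (Fin d) ℝ)
    (hC01 : ∀ i j, C i j = 0 ∨ C i j = 1)
    (hCdiag : ∀ j, C j j = 0)
    (f : (Fin d → ℝ) → (Fin d → ℝ))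
    (hf : ∀ x j, f x j = C.mulVec x j - x j * ∑ k, C.mulVec x k)
    (hedge : ∃ i j, C i j ≠ 0) :
    ∃ xstar : Fin d → ℝ,
      f xstar = 0 ∧ (∑ j, xstar j) = 1 ∧ (∀ j, 0 ≤ xstar j) ∧ xstar ≠ 0 := by
  classical
  set M : Matrix (Fin d) (Fin d) ℝ := 1 + C with hM
  -- reachability relation: r a b means there is an edge a → b
  set r : Fin d → Fin d → Prop := fun a b => C b a ≠ 0 with hr
  set Reach : Fin d → Finset (Fin d) :=
    fun v => Finset.univ.filter (fun j => Relation.ReflTransGen r v j) with hReach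
  have hselfmem : ∀ v, v ∈ Reach v := fun v => by
    simp [hReach, Relation.ReflTransGen.refl]
  -- pick v with minimal Reach
  obtain ⟨v, -, hvmin⟩ := Finset.exists_min_image Finset.univ
    (fun v => (Reach v).card) ⟨⟨0, by omega⟩, Finset.mem_univ _⟩
  set S : Finset (Fin d) := Reach v with hS
  have hvS : v ∈ S := hselfmem v
  have hSne : S.Nonempty := ⟨v, hvS⟩
  have hclosed : ∀ j ∈ S, ∀ i, C i j ≠ 0 → i ∈ S := by
    intro j hj i hij
    simp only [hS, hReach, Finset.mem_filter, Finset.mem_univ, true_and] at hj ⊢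
    exact hj.tail hij
  have hreach : ∀ u ∈ S, ∀ j ∈ S, Relation.ReflTransGen r u j := by
    intro u hu j hj
    have hsub : Reach u ⊆ S := by
      intro k hk
      simp only [hReach, Finset.mem_filter, Finset.mem_univ, true_and] at hk
      simp only [hS, hReach, Finset.mem_filter, Finset.mem_univ, true_and] at hu ⊢
      exact hu.trans hk
    have hcard : S.card ≤ (Reach u).card := hvmin u (Finset.mem_univ u)
    have : Reach u = S := Finset.eq_of_subset_of_card_le hsub hcard
    have hj' : j ∈ Reach u := this ▸ hj
    simpa [hReach] using hj'
  clear_value S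
  -- the Collatz–Wielandt feasibility set
  set K : Set (ℝ × (Fin d → ℝ)) :=
    {p | 0 ≤ p.1 ∧ p.1 ≤ (d : ℝ) + 2 ∧ (∀ j, 0 ≤ p.2 j) ∧ (∀ j ∉ S, p.2 j = 0) ∧
      (∑ j, p.2 j) = 1 ∧ ∀ i ∈ S, p.1 * p.2 i ≤ M.mulVec p.2 i} with hK
  -- the generic bound : feasible lambda are at most d+2
  have hbound : ∀ (lam : ℝ) (x : Fin d → ℝ), (∀ j, 0 ≤ x j) → (∀ j ∉ S, x j = 0) →
      (∑ j, x j) = 1 → (∀ i ∈ S, lam * x i ≤ M.mulVec x i) → lam ≤ (d : ℝ) + 2 := by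
    intro lam x hx0 hxS hx1 hcon
    have hsumS : ∑ i ∈ S, x i = 1 := by
      rw [Finset.sum_subset (Finset.subset_univ S) (fun i _ hi => hxS i hi)]
      exact hx1
    have hMx0 : ∀ i, 0 ≤ M.mulVec x i := fun i => jk_mulVec_nonneg C hC01 hx0 i
    have h1 : lam = ∑ i ∈ S, lam * x i := by
      rw [← Finset.mul_sum, hsumS, mul_one]
    have h2 : ∑ i ∈ S, lam * x i ≤ ∑ i ∈ S, M.mulVec x i :=
      Finset.sum_le_sum fun i hi => hcon i hi
    have h3 : ∑ i ∈ S, M.mulVec x i ≤ ∑ i, M.mulVec x i :=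
      Finset.sum_le_sum_of_subset_of_nonneg (Finset.subset_univ S)
        (fun i _ _ => hMx0 i)
    have h4 : ∑ i, M.mulVec x i = 1 + ∑ i, C.mulVec x i := by
      simp only [hM, Matrix.add_mulVec, Matrix.one_mulVec, Pi.add_apply]
      rw [Finset.sum_add_distrib, hx1]
    have h5 : ∑ i, C.mulVec x i ≤ (d : ℝ) := by
      have : ∀ i, C.mulVec x i ≤ 1 := by
        intro i
        have : C.mulVec x i = ∑ j, C i j * x j := by
          simp [Matrix.mulVec, dotProduct]
        rw [this, ← hx1]
        refine Finset.sum_le_sum fun j _ => ?_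
        rcases hC01 i j with h | h <;> rw [h] <;> simp [hx0 j]
      calc ∑ i, C.mulVec x i ≤ ∑ _i : Fin d, (1 : ℝ) :=
            Finset.sum_le_sum fun i _ => this i
        _ = d := by simp
    linarith [h1, h2, h3, h4, h5]
  -- K is compact
  have hKclosed : IsClosed K := by
    have hcont : ∀ i : Fin d, Continuous fun p : ℝ × (Fin d → ℝ) => M.mulVec p.2 i := by
      intro i
      have : (fun p : ℝ × (Fin d → ℝ) => M.mulVec p.2 i)
          = fun p => ∑ j, M i j * p.2 j := by
        funext p; simp [Matrix.mulVec, dotProduct]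
      rw [this]
      exact continuous_finset_sum _ fun j _ =>
        continuous_const.mul ((continuous_apply j).comp continuous_snd)
    have hKeq : K = {p : ℝ × (Fin d → ℝ) | 0 ≤ p.1} ∩ ({p | p.1 ≤ (d : ℝ) + 2} ∩
        ((⋂ j, {p : ℝ × (Fin d → ℝ) | 0 ≤ p.2 j}) ∩
        ((⋂ j, ⋂ (_ : j ∉ S), {p : ℝ × (Fin d → ℝ) | p.2 j = 0}) ∩
        ({p : ℝ × (Fin d → ℝ) | (∑ j, p.2 j) = 1} ∩
        (⋂ i, ⋂ (_ : i ∈ S), {p : ℝ × (Fin d → ℝ) | p.1 * p.2 i ≤ M.mulVec p.2 i}))))) := by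
      ext p
      simp only [hK, Set.mem_setOf_eq, Set.mem_inter_iff, Set.mem_iInter]
      try tauto
    rw [hKeq]
    refine (isClosed_le continuous_const continuous_fst).inter
      ((isClosed_le continuous_fst continuous_const).inter
      ((isClosed_iInter fun j => isClosed_le continuous_const
          ((continuous_apply j).comp continuous_snd)).inter
      ((isClosed_iInter fun j => isClosed_iInter fun _ =>
          isClosed_eq ((continuous_apply j).comp continuous_snd) continuous_const).inter
      ((isClosed_eq (continuous_finset_sum _ fun j _ =>
          (continuous_apply j).comp continuous_snd) continuous_const).inter
      (isClosed_iInter fun i => isClosed_iInter fun _ =>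
          isClosed_le (continuous_fst.mul ((continuous_apply i).comp continuous_snd))
            (hcont i))))))
  have hKsub : K ⊆ Set.Icc ((0:ℝ), (fun _ => (0:ℝ) : Fin d → ℝ)) (((d:ℝ)+2), fun _ => 1) := by
    rintro ⟨lam, x⟩ ⟨h0, h2, hx0, _, hx1, _⟩
    constructor
    · exact ⟨h0, fun j => hx0 j⟩
    · refine ⟨h2, fun j => ?_⟩
      rw [← hx1]
      exact Finset.single_le_sum (fun k _ => hx0 k) (Finset.mem_univ j)
  have hKcompact : IsCompact K := IsCompact.of_isClosed_subset isCompact_Icc hKclosed hKsub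
  -- K is nonempty
  have hScard : 0 < (S.card : ℝ) := by
    exact_mod_cast Finset.card_pos.mpr hSne
  set x0 : Fin d → ℝ := fun j => if j ∈ S then ((S.card : ℝ))⁻¹ else 0 with hx0def
  have hx0nn : ∀ j, 0 ≤ x0 j := by
    intro j
    by_cases hj : j ∈ S
    · simp only [hx0def, hj, if_true]
      exact inv_nonneg.mpr (Nat.cast_nonneg _)
    · simp [hx0def, hj]
  have hx0sum : ∑ j, x0 j = 1 := by
    simp only [hx0def]
    rw [Finset.sum_ite_mem, Finset.univ_inter, Finset.sum_const, nsmul_eq_mul]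
    exact mul_inv_cancel₀ (ne_of_gt hScard)
  have hKne : K.Nonempty := by
    refine ⟨(0, x0), le_refl 0, by positivity, hx0nn, fun j hj => by simp [hx0def, hj],
      hx0sum, fun i _ => ?_⟩
    rw [zero_mul]
    exact jk_mulVec_nonneg C hC01 hx0nn i
  -- obtain the maximizer
  obtain ⟨p0, hp0K, hp0max⟩ := hKcompact.exists_isMaxOn hKne continuous_fst.continuousOn
  obtain ⟨hl0, hl2, hxs0, hxsS, hxs1, hcon⟩ := hp0K
  set lam := p0.1 with hlam
  set xs := p0.2 with hxs
  have hmax : ∀ p ∈ K, p.1 ≤ lam := fun p hp => hp0max hp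
  -- the eigen equation holds on S
  have heq : ∀ i ∈ S, M.mulVec xs i = lam * xs i := by
    by_contra hne
    push_neg at hne
    obtain ⟨i0, hi0S, hi0ne⟩ := hne
    set z : Fin d → ℝ := fun j => M.mulVec xs j - lam * xs j with hz
    have hzS : ∀ j ∉ S, z j = 0 := by
      intro j hj
      simp only [hz, hxsS j hj, mul_zero, sub_zero]
      exact jk_support_closed C S hclosed hxsS j hj
    have hz0 : ∀ j, 0 ≤ z j := by
      intro j
      by_cases hj : j ∈ S
      · simpa [hz] using hcon j hj
      · rw [hzS j hj]
    have hzpos : 0 < z i0 := by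
      rcases lt_or_eq_of_le (hcon i0 hi0S) with h | h
      · simpa [hz] using h
      · exact absurd h.symm hi0ne
    -- find uniform N making (M^N z) positive on S
    have hch : ∀ i ∈ S, ∃ n, 0 < (M ^ n).mulVec z i := by
      intro i hi
      exact jk_reach_pos C hC01 hCdiag hz0 hzpos (hreach i0 hi0S i hi)
    set g : Fin d → ℕ := fun i => if h : i ∈ S then (hch i h).choose else 0 with hg
    set N : ℕ := Finset.univ.sup g with hN
    set w : Fin d → ℝ := (M ^ N).mulVec z with hw
    have hwpos : ∀ i ∈ S, 0 < w i := by
      intro i hi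
      have h1 : 0 < (M ^ (g i)).mulVec z i := by
        simp only [hg, dif_pos hi]
        exact (hch i hi).choose_spec
      have h2 : (M ^ (g i)).mulVec z i ≤ (M ^ N).mulVec z i :=
        jk_pow_mono C hC01 hCdiag hz0 (Finset.le_sup (Finset.mem_univ i)) i
      exact lt_of_lt_of_le h1 h2
    set y : Fin d → ℝ := (M ^ N).mulVec xs with hy
    have hy0 : ∀ j, 0 ≤ y j := fun j => jk_pow_nonneg C hC01 hxs0 N j
    have hyS : ∀ j ∉ S, y j = 0 := jk_pow_support_closed C S hclosed hxsS N
    have hxy : ∀ j, xs j ≤ y j := by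
      intro j
      have := jk_pow_mono C hC01 hCdiag hxs0 (Nat.zero_le N) j
      simpa using this
    set s : ℝ := ∑ j, y j with hsdef
    have hs1 : 1 ≤ s := by
      rw [hsdef, ← hxs1]
      exact Finset.sum_le_sum fun j _ => hxy j
    have hspos : 0 < s := lt_of_lt_of_le one_pos hs1
    -- key identity : M y = lam • y + w
    have hMy : ∀ i, M.mulVec y i = lam * y i + w i := by
      have h1 : M.mulVec xs = fun j => lam * xs j + z j := by
        funext j; simp [hz]
      have h2 : M.mulVec y = (M ^ N).mulVec (M.mulVec xs) := by
        rw [hy, Matrix.mulVec_mulVec, Matrix.mulVec_mulVec, ← pow_succ, ← pow_succ']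
      intro i
      rw [h2, h1]
      have h3 : (fun j => lam * xs j + z j) = lam • xs + z := by
        funext j; simp [smul_eq_mul]
      rw [h3, Matrix.mulVec_add, Matrix.mulVec_smul]
      simp [hy, hw, smul_eq_mul]
    -- choose epsilon
    set eps : ℝ := S.inf' hSne (fun i => w i / (y i + 1)) with heps
    have hepspos : 0 < eps := by
      rw [heps, Finset.lt_inf'_iff]
      intro i hi
      have := hy0 i
      exact div_pos (hwpos i hi) (by linarith)
    have hepsle : ∀ i ∈ S, eps * y i ≤ w i := by
      intro i hi
      have h1 : eps ≤ w i / (y i + 1) := Finset.inf'_le _ hi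
      have h2 : (0:ℝ) < y i + 1 := by have := hy0 i; linarith
      calc eps * y i ≤ eps * (y i + 1) := by
            have hy1 : y i ≤ y i + 1 := by linarith
            exact mul_le_mul_of_nonneg_left hy1 hepspos.le
        _ ≤ (w i / (y i + 1)) * (y i + 1) := by
            apply mul_le_mul_of_nonneg_right h1 h2.le
        _ = w i := div_mul_cancel₀ _ h2.ne'
    -- the improved point
    have hmem : (lam + eps, fun j => y j / s) ∈ K := by
      have hnn : ∀ j, 0 ≤ y j / s := fun j => div_nonneg (hy0 j) hspos.le
      have hsupp : ∀ j ∉ S, y j / s = 0 := fun j hj => by rw [hyS j hj, zero_div]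
      have hsum : ∑ j, y j / s = 1 := by
        rw [← Finset.sum_div, ← hsdef, div_self hspos.ne']
      have hcon' : ∀ i ∈ S, (lam + eps) * (y i / s) ≤ M.mulVec (fun j => y j / s) i := by
        intro i hi
        have hrw : (fun j => y j / s) = s⁻¹ • y := by
          funext j; simp [smul_eq_mul]; ring
        rw [hrw, Matrix.mulVec_smul]
        have hcore : (lam + eps) * y i ≤ M.mulVec y i := by
          rw [hMy i]
          have := hepsle i hi
          nlinarith
        simp only [Pi.smul_apply, smul_eq_mul]
        rw [show (lam + eps) * (y i / s) = s⁻¹ * ((lam + eps) * y i) by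
          field_simp
          try ring]
        exact mul_le_mul_of_nonneg_left hcore (inv_nonneg.mpr hspos.le)
      exact ⟨by linarith [hepspos, hl0], hbound (lam + eps) _ hnn hsupp hsum hcon',
        hnn, hsupp, hsum, hcon'⟩
    have := hmax _ hmem
    simp only at this
    linarith
  -- conclude : global eigen equation
  have hCx : ∀ j, C.mulVec xs j = (lam - 1) * xs j := by
    intro j
    have hMC : M.mulVec xs j = xs j + C.mulVec xs j := by
      simp [hM, Matrix.add_mulVec, Matrix.one_mulVec]
    by_cases hj : j ∈ S
    · have := heq j hj
      rw [hMC] at this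
      linarith
    · have h1 := jk_support_closed C S hclosed hxsS j hj
      rw [hMC, hxsS j hj] at h1
      rw [hxsS j hj]
      linarith
  refine ⟨xs, ?_, hxs1, hxs0, ?_⟩
  · funext j
    rw [hf]
    have hsum : ∑ k, C.mulVec xs k = lam - 1 := by
      simp only [hCx]
      rw [← Finset.mul_sum, hxs1, mul_one]
    rw [hCx j, hsum]
    simp [mul_comm]
  · intro h
    rw [h] at hxs1
    simp at hxs1
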